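/- Let $(G_n)_{n\ge 1}$ be a sequence of finite solvable groups of derived length at most $\ell$ with $|G_n| \to \infty$. Then for every function $f : \mathbb{N} \to \mathbb{N}$ there exist $n$ and $k$ such that $ab_k(G_n) > f(k)$. -/
import Mathlib


open Filter

/-- The abelianization growth function: `ab_k(G)` is the largest index `|H : H'|`
over subgroups `H ≤ G` of index at most `k`. -/
noncomputable def abGrowth (G : Type*) [Group G] (k : ℕ) : ℕ :=
  sSup {n | ∃ H : Subgroup G, H.index ≤ k ∧ n = Nat.card (Abelianization H)}

lemma card_abelianization_eq {G : Type*} [Group G] :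
    Nat.card (Abelianization G) = (commutator G).index := rfl

lemma le_abGrowth {G : Type*} [Group G] [Finite G] {k : ℕ} (H : Subgroup G)
    (h : H.index ≤ k) : Nat.card (Abelianization H) ≤ abGrowth G k := by
  refine le_csSup ⟨Nat.card G, ?_⟩ ⟨H, h, rfl⟩
  rintro n ⟨K, -, rfl⟩
  have h1 : Nat.card (Abelianization K) ∣ Nat.card K := by
    rw [card_abelianization_eq]
    exact Subgroup.index_dvd_card _
  have h2 : Nat.card K ∣ Nat.card G := Subgroup.card_subgroup_dvd_card K
  exact Nat.le_of_dvd Nat.card_pos (h1.trans h2)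

lemma abGrowth_le {G : Type*} [Group G] {k M : ℕ}
    (h : ∀ H : Subgroup G, H.index ≤ k → Nat.card (Abelianization H) ≤ M) :
    abGrowth G k ≤ M := by
  apply csSup_le';
  rintro n ⟨H, hH, rfl⟩
  exact h H hH

lemma abGrowth_mono {G : Type*} [Group G] [Finite G] {k k' : ℕ} (h : k ≤ k') :
    abGrowth G k ≤ abGrowth G k' :=
  abGrowth_le fun H hH => le_abGrowth H (hH.trans h)

lemma abGrowth_subgroup_le {G : Type*} [Group G] [Finite G] (H : Subgroup G) (k : ℕ) :
    abGrowth H k ≤ abGrowth G (k * H.index) := by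
  apply abGrowth_le
  intro K hK
  have hinj : Function.Injective H.subtype := H.subtype_injective
  set K' := K.map H.subtype with hK'
  have hle : K' ≤ H := Subgroup.map_subtype_le K
  have hrel : K'.relIndex H = K.index := by
    have : K'.subgroupOf H = K := Subgroup.comap_map_eq_self_of_injective hinj K
    rw [Subgroup.relIndex, this]
  have hidx : K'.index = K.index * H.index := by
    rw [← Subgroup.relIndex_mul_index hle, hrel]
  have hcardeq : Nat.card (Abelianization K) = Nat.card (Abelianization K') :=
    Nat.card_congr (MulEquiv.abelianizationCongr
      (Subgroup.equivMapOfInjective K H.subtype hinj)).toEquiv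
  rw [hcardeq]
  exact le_abGrowth K' (by rw [hidx]; exact Nat.mul_le_mul_right _ hK)

lemma derivedSeries_commutator_map_le (G : Type*) [Group G] (m : ℕ) :
    (derivedSeries (commutator G) m).map (commutator G).subtype ≤ derivedSeries G (m + 1) := by
  induction m with
  | zero =>
    rw [derivedSeries_zero, derivedSeries_one]
    exact Subgroup.map_subtype_le _
  | succ m ih =>
    rw [derivedSeries_succ, Subgroup.map_commutator, derivedSeries_succ]
    exact Subgroup.commutator_mono ih ih

lemma derivedSeries_commutator_eq_bot {G : Type*} [Group G] {m : ℕ}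
    (h : derivedSeries G (m + 1) = ⊥) : derivedSeries (commutator G) m = ⊥ := by
  have h2 := derivedSeries_commutator_map_le G m
  rw [h, le_bot_iff] at h2
  exact (Subgroup.map_eq_bot_iff_of_injective _ (commutator G).subtype_injective).mp h2

/-- Recursive bound for the cardinality of a solvable group whose `abGrowth` is
bounded by `g`. -/
def solvBound : ℕ → (ℕ → ℕ) → ℕ
  | 0, _ => 1
  | (l + 1), g => g 1 * solvBound l (fun k => g (k * g 1))

lemma card_le_solvBound (l : ℕ) :
    ∀ (g : ℕ → ℕ) (G : Type) [Group G] [Finite G],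
      derivedSeries G l = ⊥ → (∀ k, abGrowth G k ≤ g k) → Nat.card G ≤ solvBound l g := by
  induction l with
  | zero =>
    intro g G _ _ hd _
    rw [derivedSeries_zero] at hd
    have : Subsingleton G := by
      constructor
      intro a b
      have ha : a * b⁻¹ ∈ (⊥ : Subgroup G) := hd ▸ Subgroup.mem_top _
      rw [Subgroup.mem_bot] at ha
      have := mul_inv_eq_one.mp ha
      exact this
    have h1 : Nat.card G = 1 := Nat.card_eq_one_iff_unique.mpr ⟨this, ⟨1⟩⟩
    simp [solvBound, h1]
  | succ l ih =>
    intro g G _ _ hd hg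
    set H := commutator G with hHdef
    -- index of the commutator subgroup is at most g 1
    have h1 : H.index ≤ g 1 := by
      have htop : (⊤ : Subgroup G).index ≤ 1 := le_of_eq Subgroup.index_top
      have := le_abGrowth (⊤ : Subgroup G) htop
      have hcong : Nat.card (Abelianization ((⊤ : Subgroup G))) = H.index := by
        rw [← card_abelianization_eq]
        exact Nat.card_congr (MulEquiv.abelianizationCongr Subgroup.topEquiv).toEquiv
      rw [hcong] at this
      exact this.trans (hg 1)
    have hH : derivedSeries H l = ⊥ := derivedSeries_commutator_eq_bot hd
    have hgH : ∀ k, abGrowth H k ≤ g (k * g 1) := by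
      intro k
      refine (abGrowth_subgroup_le H k).trans ?_
      refine (abGrowth_mono (Nat.mul_le_mul_left k h1)).trans (hg _)
    have hcardH := ih (fun k => g (k * g 1)) H hH hgH
    calc Nat.card G = H.index * Nat.card H := (Subgroup.index_mul_card H).symm
      _ ≤ g 1 * solvBound l (fun k => g (k * g 1)) := Nat.mul_le_mul h1 hcardH
      _ = solvBound (l + 1) g := rfl

/-- A sequence of finite solvable groups of bounded derived length and unbounded order
fails the property BAb: no function `f` bounds `ab_k(G_n)` uniformly in `n`. -/
theorem solvable_bounded_derived_length_not_BAb
    (ℓ : ℕ) (G : ℕ → Type) [∀ n, Group (G n)] [∀ n, Finite (G n)]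
    (hsolv : ∀ n, derivedSeries (G n) ℓ = ⊥)
    (hcard : Tendsto (fun n => Nat.card (G n)) atTop atTop)
    (f : ℕ → ℕ) :
    ∃ n k, f k < abGrowth (G n) k := by
  by_contra h
  push_neg at h
  have hbd : ∀ n, Nat.card (G n) ≤ solvBound ℓ f := fun n =>
    card_le_solvBound ℓ f (G n) (hsolv n) (h n)
  obtain ⟨n, hn⟩ := (hcard.eventually_ge_atTop (solvBound ℓ f + 1)).exists
  have := hbd n
  omega
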